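/- Let n ≥ 2 be an integer and for each positive integer k let ω_k = π^{k/2}/Γ(k/2 + 1) be the volume of the unit ball in ℝ^k. Then: (i) (n+1) ω_{n+1} > 2 ω_n; (ii) (n+2) ω_{n+2} = 2π ω_n; and (iii) for every integer m ≥ 3, (n+m) ω_{n+m} < m ω_m ω_n. Consequently, max{ m ω_m / ((n+m) ω_{n+m}), 1/ω_n } equals 1/ω_n if m ∈ {1,2} and equals m ω_m / ((n+m) ω_{n+m}) if m ≥ 3. -/

import Mathlib

open Real


/-- The Lebesgue volume of the unit ball in `ℝ^k`. -/
noncomputable def ballVol (k : ℕ) : ℝ := Real.pi ^ ((k : ℝ) / 2) / Real.Gamma ((k : ℝ) / 2 + 1)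

lemma ballVol_pos (k : ℕ) : 0 < ballVol k := by
  unfold ballVol
  exact div_pos (Real.rpow_pos_of_pos Real.pi_pos _) (Real.Gamma_pos_of_pos (by positivity))

lemma ballVol_rec (k : ℕ) : ((k:ℝ)+2) * ballVol (k+2) = 2 * Real.pi * ballVol k := by
  unfold ballVol
  have h1 : ((k+2:ℕ):ℝ)/2 = (k:ℝ)/2 + 1 := by push_cast; ring
  rw [h1, Real.Gamma_add_one (by positivity : ((k:ℝ)/2+1) ≠ 0),
    Real.rpow_add Real.pi_pos, Real.rpow_one]
  have hΓ : Real.Gamma ((k:ℝ)/2+1) ≠ 0 := (Real.Gamma_pos_of_pos (by positivity)).ne'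
  field_simp

lemma ballVol_zero : ballVol 0 = 1 := by
  unfold ballVol
  norm_num [Real.Gamma_one]

lemma ballVol_one : ballVol 1 = 2 := by
  unfold ballVol
  have h1 : ((1:ℕ):ℝ)/2 = (1:ℝ)/2 := by norm_num
  rw [h1, Real.Gamma_add_one (by norm_num), Real.Gamma_one_half_eq,
    ← Real.sqrt_eq_rpow]
  have : Real.sqrt Real.pi ≠ 0 := (Real.sqrt_pos.mpr Real.pi_pos).ne'
  field_simp

lemma ballVol_two : ballVol 2 = Real.pi := by
  have h := ballVol_rec 0
  rw [ballVol_zero] at h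
  norm_num at h
  linarith

lemma ballVol_three : ballVol 3 = 4 * Real.pi / 3 := by
  have h := ballVol_rec 1
  rw [ballVol_one] at h
  norm_num at h
  linarith

lemma ballVol_four : ballVol 4 = Real.pi ^ 2 / 2 := by
  have h := ballVol_rec 2
  rw [ballVol_two] at h
  norm_num at h
  nlinarith [h]

lemma lemA (n : ℕ) (hn : 2 ≤ n) : 2 * ballVol n < ((n:ℝ)+1) * ballVol (n+1) := by
  induction n using Nat.strong_induction_on with
  | _ n ih =>
    match n, hn with
    | 2, _ =>
      rw [ballVol_two, show (2+1 : ℕ) = 3 from rfl, ballVol_three]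
      push_cast
      nlinarith [Real.pi_pos]
    | 3, _ =>
      rw [ballVol_three, show (3+1 : ℕ) = 4 from rfl, ballVol_four]
      push_cast
      nlinarith [Real.pi_gt_three]
    | (k+4), _ =>
      have IH := ih (k+2) (by omega) (by omega)
      have r1 := ballVol_rec (k+2)
      have r2 := ballVol_rec (k+3)
      push_cast at IH r1 r2 ⊢
      nlinarith [Real.pi_pos, ballVol_pos (k+2), ballVol_pos (k+3), ballVol_pos (k+4),
        ballVol_pos (k+5), mul_pos Real.pi_pos (ballVol_pos (k+3)),
        mul_lt_mul_of_pos_left IH (by positivity : (0:ℝ) < 2*Real.pi),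
        (show (0:ℝ) < (k:ℝ)+4 by positivity)]

lemma lemT (n : ℕ) (hn : 2 ≤ n) : ballVol (n+1) < 2 * ballVol n := by
  induction n using Nat.strong_induction_on with
  | _ n ih =>
    match n, hn with
    | 2, _ =>
      rw [ballVol_two, show (2+1 : ℕ) = 3 from rfl, ballVol_three]
      nlinarith [Real.pi_pos]
    | 3, _ =>
      rw [ballVol_three, show (3+1 : ℕ) = 4 from rfl, ballVol_four]
      nlinarith [Real.pi_pos, Real.pi_lt_d2]
    | (k+4), _ =>
      have IH := ih (k+2) (by omega) (by omega)
      have r1 := ballVol_rec (k+2)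
      have r2 := ballVol_rec (k+3)
      push_cast at IH r1 r2 ⊢
      nlinarith [Real.pi_pos, ballVol_pos (k+2), ballVol_pos (k+3), ballVol_pos (k+4),
        ballVol_pos (k+5), mul_pos Real.pi_pos (ballVol_pos (k+2)),
        mul_lt_mul_of_pos_left IH (by positivity : (0:ℝ) < 2*Real.pi),
        (show (0:ℝ) < (k:ℝ)+4 by positivity), (show (0:ℝ) < (k:ℝ)+5 by positivity)]

lemma lemC (n : ℕ) (hn : 2 ≤ n) (m : ℕ) (hm : 3 ≤ m) :
    ((n:ℝ) + m) * ballVol (n + m) < (m : ℝ) * ballVol m * ballVol n := by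
  induction m using Nat.strong_induction_on with
  | _ m ih =>
    match m, hm with
    | 3, _ =>
      have r := ballVol_rec (n+1)
      have hT := lemT n hn
      rw [ballVol_three]
      have e : n + 3 = (n+1) + 2 := by omega
      rw [e]
      push_cast at r ⊢
      nlinarith [Real.pi_pos, ballVol_pos n, ballVol_pos (n+1)]
    | 4, _ =>
      have r1 := ballVol_rec (n+2)
      have r2 := ballVol_rec n
      rw [ballVol_four]
      have e : n + 4 = (n+2) + 2 := by omega
      rw [e]
      have hn' : (2:ℝ) ≤ (n:ℝ) := by exact_mod_cast hn
      push_cast at r1 r2 ⊢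
      nlinarith [Real.pi_pos, ballVol_pos n, ballVol_pos (n+2),
        mul_pos Real.pi_pos (ballVol_pos n), sq_nonneg Real.pi,
        mul_pos (mul_pos Real.pi_pos Real.pi_pos) (ballVol_pos n)]
    | (k+5), _ =>
      have IH := ih (k+3) (by omega) (by omega)
      have r1 := ballVol_rec (n+(k+3))
      have r2 := ballVol_rec (k+3)
      have e : n + (k+5) = (n+(k+3)) + 2 := by omega
      have e2 : (k+3) + 2 = k + 5 := by omega
      rw [e2] at r2
      rw [e]
      have hn' : (2:ℝ) ≤ (n:ℝ) := by exact_mod_cast hn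
      have key : ballVol (n+(k+3)) < ballVol (k+3) * ballVol n := by
        nlinarith [IH, mul_pos (ballVol_pos (k+3)) (ballVol_pos n),
          ballVol_pos (n+(k+3)), (show (0:ℝ) < (n:ℝ)+(k+3) by positivity)]
      push_cast at r1 r2 ⊢
      calc ((n:ℝ) + ((k:ℝ)+5)) * ballVol (n+(k+3)+2)
          = 2 * Real.pi * ballVol (n+(k+3)) := by linear_combination r1
        _ < 2 * Real.pi * (ballVol (k+3) * ballVol n) :=
            mul_lt_mul_of_pos_left key (by positivity)
        _ = ((k:ℝ)+5) * ballVol (k+5) * ballVol n := by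
            linear_combination (-(ballVol n)) * r2

theorem stmt_16 (n : ℕ) (hn : 2 ≤ n) :
    (2 * ballVol n < ((n : ℝ) + 1) * ballVol (n + 1)) ∧
    (((n : ℝ) + 2) * ballVol (n + 2) = 2 * Real.pi * ballVol n) ∧
    (∀ m : ℕ, 3 ≤ m → ((n : ℝ) + m) * ballVol (n + m) < (m : ℝ) * ballVol m * ballVol n) ∧
    (∀ m : ℕ, 1 ≤ m →
      ((m = 1 ∨ m = 2) →
          max ((m : ℝ) * ballVol m / (((n : ℝ) + m) * ballVol (n + m))) (1 / ballVol n) =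
            1 / ballVol n) ∧
      (3 ≤ m →
          max ((m : ℝ) * ballVol m / (((n : ℝ) + m) * ballVol (n + m))) (1 / ballVol n) =
            (m : ℝ) * ballVol m / (((n : ℝ) + m) * ballVol (n + m)))) := by
  have hA := lemA n hn
  have hB := ballVol_rec n
  have hden : ∀ k : ℕ, (0:ℝ) < ((n:ℝ) + k) * ballVol (n + k) := fun k => by
    have := ballVol_pos (n + k)
    have h2 : (2:ℝ) ≤ (n:ℝ) := by exact_mod_cast hn
    positivity
  refine ⟨hA, hB, fun m hm => lemC n hn m hm, fun m hm => ⟨?_, ?_⟩⟩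
  · rintro (rfl | rfl)
    · apply max_eq_right
      rw [div_le_div_iff₀ (by simpa using hden 1) (ballVol_pos n)]
      push_cast
      rw [ballVol_one]
      nlinarith [hA]
    · apply max_eq_right
      rw [div_le_div_iff₀ (by simpa using hden 2) (ballVol_pos n)]
      push_cast
      rw [ballVol_two]
      nlinarith [hB]
  · intro hm3
    apply max_eq_left
    rw [div_le_div_iff₀ (ballVol_pos n) (hden m)]
    nlinarith [lemC n hn m hm3]
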